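/- If λ_n denotes the largest real root of LT_n(x) = x^{2n} - x^{n+1} - x^n - x^{n-1} + 1, then the sequence (λ_n)^n converges to γ_0^2 = (3+√5)/2 as n → ∞. -/

import Mathlib

open Filter

private lemma LT_key (l : ℝ) (n : ℕ) (hl : 1 < l) (hn : 2 ≤ n)
    (heq : l ^ (2 * n) - l ^ (n + 1) - l ^ n - l ^ (n - 1) + 1 = 0) :
    l ^ n + (l ^ n)⁻¹ = l + 1 + l⁻¹ := by
  have hl0 : l ≠ 0 := by positivity
  have hy1 : 1 < l ^ n := one_lt_pow₀ hl (by omega)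
  have hy0 : l ^ n ≠ 0 := by positivity
  have h1 : l ^ (n - 1) * l = l ^ n := by
    rw [← pow_succ]; congr 1; omega
  have e2 : l ^ (2 * n) = (l ^ n) ^ 2 := by rw [two_mul, pow_add, sq]
  have e3 : l ^ (n + 1) = l ^ n * l := pow_succ l n
  rw [e2, e3] at heq
  have key0 : (l ^ n) ^ 2 * l - l ^ n * l * l - l ^ n * l - l ^ n + l = 0 := by
    linear_combination l * heq + h1
  field_simp
  linear_combination key0

private lemma LT_val (l : ℝ) (n : ℕ) (hl : 1 < l) (hn : 2 ≤ n)
    (heq : l ^ (2 * n) - l ^ (n + 1) - l ^ n - l ^ (n - 1) + 1 = 0) :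
    l ^ n = (l + 1 + l⁻¹ + Real.sqrt ((l + 1 + l⁻¹) ^ 2 - 4)) / 2 := by
  have hc := LT_key l n hl hn heq
  have hy1 : 1 < l ^ n := one_lt_pow₀ hl (by omega)
  have hy0 : (l ^ n) ≠ 0 := by positivity
  have hinv : (l ^ n)⁻¹ < 1 := inv_lt_one_of_one_lt₀ hy1
  have hs : Real.sqrt ((l + 1 + l⁻¹) ^ 2 - 4) = l ^ n - (l ^ n)⁻¹ := by
    have : (l + 1 + l⁻¹) ^ 2 - 4 = (l ^ n - (l ^ n)⁻¹) ^ 2 := by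
      rw [← hc]; field_simp; ring
    rw [this]
    exact Real.sqrt_sq (by linarith)
  rw [hs, ← hc]; ring

private lemma LT_bound (l : ℝ) (n : ℕ) (hl : 1 < l) (hn : 2 ≤ n)
    (heq : l ^ (2 * n) - l ^ (n + 1) - l ^ n - l ^ (n - 1) + 1 = 0) :
    l ^ n ≤ 4 := by
  have hc := LT_key l n hl hn heq
  have hy1 : 1 < l ^ n := one_lt_pow₀ hl (by omega)
  have hinvpos : 0 < (l ^ n)⁻¹ := by positivity
  have hlinv : l⁻¹ ≤ 1 := by
    have hmul : l * l⁻¹ = 1 := mul_inv_cancel₀ (by positivity)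
    nlinarith
  have hyc : l ^ n ≤ l + 2 := by linarith
  have hl2 : l ^ 2 ≤ l ^ n := pow_le_pow_right₀ hl.le hn
  have hl2' : l ≤ 2 := by nlinarith
  linarith

theorem LT_root_pow_tendsto_golden_sq (lam : ℕ → ℝ)
    (hlam : ∀ n, 2 ≤ n → 1 < lam n ∧
      (lam n) ^ (2 * n) - (lam n) ^ (n + 1) - (lam n) ^ n - (lam n) ^ (n - 1) + 1 = 0) :
    Tendsto (fun n => (lam n) ^ n) atTop (nhds (((1 + Real.sqrt 5) / 2) ^ 2)) := by
  -- Step 1: lam n → 1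
  have hbd : ∀ n, 2 ≤ n → lam n ≤ (4 : ℝ) ^ ((n : ℝ)⁻¹) := by
    intro n hn
    obtain ⟨h1, h2⟩ := hlam n hn
    have h4 : lam n ^ n ≤ 4 := LT_bound _ n h1 hn h2
    have hn0 : (n : ℝ) ≠ 0 := by positivity
    have := Real.rpow_le_rpow (by positivity) h4 (by positivity : (0:ℝ) ≤ (n : ℝ)⁻¹)
    calc lam n = (lam n ^ n) ^ ((n : ℝ)⁻¹) := by
          rw [← Real.rpow_natCast (lam n) n, ← Real.rpow_mul (by linarith),
            mul_inv_cancel₀ hn0, Real.rpow_one]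
      _ ≤ (4 : ℝ) ^ ((n : ℝ)⁻¹) := this
  have hub : Tendsto (fun n : ℕ => (4 : ℝ) ^ ((n : ℝ)⁻¹)) atTop (nhds 1) := by
    have h0 : Tendsto (fun n : ℕ => ((n : ℝ))⁻¹) atTop (nhds 0) :=
      tendsto_inv_atTop_zero.comp tendsto_natCast_atTop_atTop
    have hc : ContinuousAt (fun x : ℝ => (4 : ℝ) ^ x) 0 :=
      Real.continuousAt_const_rpow (by norm_num)
    have := hc.tendsto.comp h0
    simpa [Function.comp_def] using this
  have hlam1 : Tendsto lam atTop (nhds 1) := by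
    apply tendsto_of_tendsto_of_tendsto_of_le_of_le' tendsto_const_nhds hub
    · filter_upwards [eventually_ge_atTop 2] with n hn
      exact (hlam n hn).1.le
    · filter_upwards [eventually_ge_atTop 2] with n hn
      exact hbd n hn
  -- Step 2: continuity of the explicit formula
  set g : ℝ → ℝ := fun l => (l + 1 + l⁻¹ + Real.sqrt ((l + 1 + l⁻¹) ^ 2 - 4)) / 2 with hg
  have hcont : ContinuousAt g 1 := by
    have h1 : ContinuousAt (fun l : ℝ => l + 1 + l⁻¹) 1 :=
      (continuousAt_id.add continuousAt_const).add (continuousAt_inv₀ one_ne_zero)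
    exact ((h1.add (Real.continuous_sqrt.continuousAt.comp
      ((h1.pow 2).sub continuousAt_const))).div_const 2)
  have hgt : Tendsto (fun n => g (lam n)) atTop (nhds (g 1)) :=
    hcont.tendsto.comp hlam1
  have hg1 : g 1 = ((1 + Real.sqrt 5) / 2) ^ 2 := by
    have h5 : Real.sqrt 5 ^ 2 = 5 := Real.sq_sqrt (by norm_num)
    have : g 1 = (3 + Real.sqrt 5) / 2 := by
      simp only [hg]; norm_num
    rw [this]; nlinarith [h5]
  rw [← hg1]
  apply hgt.congr'
  filter_upwards [eventually_ge_atTop 2] with n hn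
  obtain ⟨h1, h2⟩ := hlam n hn
  exact (LT_val _ n h1 hn h2).symm
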